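/- Let a, b, c, d ∈ ℂ all be nonzero, and define V : ℂ⁴ → ℝ by V(φ₁, φ₂, φ₃, φ₄) = |a + c·φ₂·φ₃|² + |2b·φ₂ + c·φ₁·φ₃|² + |c·φ₁·φ₂ + d·φ₄|² + |d·φ₃|². Then V > 0 everywhere on ℂ⁴, yet the infimum of V over ℂ⁴ equals 0; in particular the infimum is not attained. (The metastable SUSY breaking model has a SUSY runaway direction: along φ₁ = 2ab/(c²φ₃²), φ₂ = −a/(cφ₃), φ₄ = 2a²b/(c²dφ₃³) with φ₃ → 0, V = |dφ₃|² → 0.) -/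

import Mathlib

/-- The metastable SUSY breaking model: the scalar potential is everywhere positive, its
infimum is `0`, and in particular the infimum is not attained (a SUSY runaway direction). -/
theorem metastable_model_runaway (a b c d : ℂ)
    (ha : a ≠ 0) (hb : b ≠ 0) (hc : c ≠ 0) (hd : d ≠ 0)
    (V : ℂ × ℂ × ℂ × ℂ → ℝ)
    (hV : ∀ p, V p = ‖a + c * p.2.1 * p.2.2.1‖ ^ 2
      + ‖2 * b * p.2.1 + c * p.1 * p.2.2.1‖ ^ 2
      + ‖c * p.1 * p.2.1 + d * p.2.2.2‖ ^ 2
      + ‖d * p.2.2.1‖ ^ 2) :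
    (∀ p, 0 < V p) ∧ IsGLB (Set.range V) 0 ∧ 0 ∉ Set.range V := by
  have hpos : ∀ p, 0 < V p := by
    intro p
    rw [hV]
    rcases eq_or_ne (‖d * p.2.2.1‖ ^ 2) 0 with h4 | h4
    · -- then p.2.2.1 = 0, so first term is |a|^2 > 0
      have h3 : p.2.2.1 = 0 := by
        have := pow_eq_zero_iff (n := 2) (by norm_num) |>.mp h4
        have := norm_eq_zero.mp this
        rcases mul_eq_zero.mp this with h | h
        · exact absurd h hd
        · exact h
      have h1 : 0 < ‖a + c * p.2.1 * p.2.2.1‖ ^ 2 := by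
        rw [h3]
        simp only [mul_zero, add_zero]
        exact pow_pos (norm_pos_iff.mpr ha) 2
      have := sq_nonneg (‖2 * b * p.2.1 + c * p.1 * p.2.2.1‖)
      have := sq_nonneg (‖c * p.1 * p.2.1 + d * p.2.2.2‖)
      have := sq_nonneg (‖d * p.2.2.1‖)
      linarith
    · have h4' : 0 < ‖d * p.2.2.1‖ ^ 2 :=
        lt_of_le_of_ne (sq_nonneg _) (Ne.symm h4)
      have := sq_nonneg (‖a + c * p.2.1 * p.2.2.1‖)
      have := sq_nonneg (‖2 * b * p.2.1 + c * p.1 * p.2.2.1‖)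
      have := sq_nonneg (‖c * p.1 * p.2.1 + d * p.2.2.2‖)
      linarith
  -- runaway: for t ≠ 0, V (p t) = |d|^2 * |t|^2
  have hrun : ∀ t : ℂ, t ≠ 0 →
      V (2*a*b/(c^2*t^2), -a/(c*t), t, 2*a^2*b/(c^2*d*t^3)) = ‖d*t‖ ^ 2 := by
    intro t ht
    rw [hV]
    have e1 : a + c * (-a/(c*t)) * t = 0 := by field_simp; ring
    have e2 : 2*b * (-a/(c*t)) + c * (2*a*b/(c^2*t^2)) * t = 0 := by
      field_simp; ring
    have e3 : c * (2*a*b/(c^2*t^2)) * (-a/(c*t)) + d * (2*a^2*b/(c^2*d*t^3)) = 0 := by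
      field_simp; ring
    simp [e1, e2, e3]
  refine ⟨hpos, ⟨?_, ?_⟩, ?_⟩
  · rintro x ⟨p, rfl⟩
    exact (hpos p).le
  · intro m hm
    by_contra hm0
    push_neg at hm0
    -- pick t real small so that |d*t|^2 < m
    set ε := m / (‖d‖ ^ 2 + 1) with hε
    have hεpos : 0 < ε := div_pos hm0 (by positivity)
    set t : ℝ := min (Real.sqrt ε) 1 with htdef
    have ht0 : 0 < t := lt_min (Real.sqrt_pos.mpr hεpos) one_pos
    have htc : (t : ℂ) ≠ 0 := by exact_mod_cast ht0.ne'
    have hval := hrun (t : ℂ) htc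
    have hle : ‖d * (t:ℂ)‖ ^ 2 < m := by
      rw [norm_mul, Complex.norm_real, Real.norm_eq_abs, abs_of_pos ht0, mul_pow]
      have h1 : t ≤ Real.sqrt ε := min_le_left _ _
      have h2 : t ≤ 1 := min_le_right _ _
      have ht2 : t ^ 2 ≤ ε := by
        calc t ^ 2 ≤ Real.sqrt ε ^ 2 := by
              apply pow_le_pow_left₀ ht0.le h1
          _ = ε := Real.sq_sqrt hεpos.le
      have : ‖d‖ ^ 2 * t ^ 2 ≤ ‖d‖ ^ 2 * ε :=
        mul_le_mul_of_nonneg_left ht2 (by positivity)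
      have hlt : ‖d‖ ^ 2 * ε < (‖d‖ ^ 2 + 1) * ε := by
        apply mul_lt_mul_of_pos_right _ hεpos
        linarith
      have heq : (‖d‖ ^ 2 + 1) * ε = m := by
        rw [hε]; field_simp
      linarith
    have := hm ⟨_, hval⟩
    linarith
  · rintro ⟨p, hp⟩
    exact absurd hp.symm (hpos p).ne
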